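/- arXiv:2108.07718 — 10 statements merged into one kernel-verified Lean document; each statement's English description precedes it below -/
import Mathlib

section
/- Let a : ℕ → ℝ be the sequence of nested radicals defined by a₀ = 0 and aₖ = √(2 + aₖ₋₁) for k ≥ 1. Then for every integer k ≥ 1, π/4 = 2^(k-1) · arctan( √(2 - aₖ₋₁) / aₖ ). -/
open Real

theorem pi_div_four_nested_radicals (a : ℕ → ℝ) (h0 : a 0 = 0)
    (ha : ∀ k : ℕ, 1 ≤ k → a k = Real.sqrt (2 + a (k - 1))) :
    ∀ k : ℕ, 1 ≤ k →
      Real.pi / 4 =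
        2 ^ (k - 1) * Real.arctan (Real.sqrt (2 - a (k - 1)) / a k) := by
  have hcos : ∀ k : ℕ, a k = 2 * Real.cos (π / 2 ^ (k + 1)) := by
    intro k
    induction k with
    | zero => simp [h0, Real.cos_pi_div_two]
    | succ n ih =>
      have h1 : a (n + 1) = Real.sqrt (2 + a n) := by
        simpa using ha (n + 1) (by omega)
      set x := π / 2 ^ (n + 1) with hx
      have hx2 : x / 2 = π / 2 ^ (n + 2) := by
        rw [hx]; ring
      have hxpos : 0 < x := by positivity
      have hxle : x ≤ π := by
        rw [hx]
        apply div_le_self pi_pos.le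
        exact one_le_pow₀ (by norm_num)
      have hcosnn : 0 ≤ Real.cos (x / 2) := by
        apply Real.cos_nonneg_of_mem_Icc
        constructor
        · linarith
        · linarith
      have key : 2 + 2 * Real.cos x = (2 * Real.cos (x / 2)) ^ 2 := by
        have h := Real.cos_sq (x / 2)
        rw [show 2 * (x / 2) = x by ring] at h
        nlinarith [h]
      rw [h1, ih, key, Real.sqrt_sq (by positivity), hx2]
  intro k hk
  obtain ⟨m, rfl⟩ : ∃ m, k = m + 1 := ⟨k - 1, by omega⟩
  simp only [Nat.add_sub_cancel]
  set y := π / 2 ^ (m + 2) with hy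
  have hypos : 0 < y := by positivity
  have hylt : y < π / 2 := by
    rw [hy]
    apply div_lt_div_of_pos_left pi_pos (by norm_num)
    have : (2:ℝ) ^ 1 < 2 ^ (m + 2) := by
      apply pow_lt_pow_right₀ (by norm_num) (by omega)
    simpa using this
  have hx2 : (π / 2 ^ (m + 1)) / 2 = y := by rw [hy]; ring
  have hsin : Real.sqrt (2 - a m) = 2 * Real.sin y := by
    have hynn : 0 ≤ Real.sin y := Real.sin_nonneg_of_nonneg_of_le_pi hypos.le
      (by linarith [pi_pos])
    have key : 2 - 2 * Real.cos (π / 2 ^ (m + 1)) = (2 * Real.sin y) ^ 2 := by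
      have h := Real.sin_sq y
      have h2 := Real.cos_sq y
      have h3 : 2 * y = π / 2 ^ (m + 1) := by rw [hy]; ring
      rw [h3] at h2
      nlinarith [h, h2]
    rw [hcos m, key, Real.sqrt_sq (by positivity)]
  have hcosy : 0 < Real.cos y := Real.cos_pos_of_mem_Ioo ⟨by linarith [pi_pos], hylt⟩
  have hak : a (m + 1) = 2 * Real.cos y := by rw [hcos (m + 1)]
  rw [hsin, hak]
  have : 2 * Real.sin y / (2 * Real.cos y) = Real.tan y := by
    rw [Real.tan_eq_sin_div_cos]; ring
  rw [this, Real.arctan_tan (by linarith) hylt, hy]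
  have h2 : (2:ℝ) ^ (m + 2) = 2 ^ m * 4 := by ring
  rw [h2]
  field_simp
end

section
/- Let β be a real number, let k ≥ 1 be an integer, and define σ, τ : ℕ → ℝ by σ₁ = (β² - 1)/(β² + 1), τ₁ = 2β/(β² + 1), and for n ≥ 2, σₙ = σₙ₋₁² - τₙ₋₁², τₙ = 2σₙ₋₁τₙ₋₁. If τₖ ≠ 1, then the complex number 2/ ( ((β + i)/(β - i))^(2^(k-1)) - i ) - i equals the real number σₖ/(1 - τₖ). -/
open Complex in
theorem beta_two_formula (β : ℝ) (k : ℕ) (hk : 1 ≤ k) (σ τ : ℕ → ℝ)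
    (hσ1 : σ 1 = (β ^ 2 - 1) / (β ^ 2 + 1))
    (hτ1 : τ 1 = 2 * β / (β ^ 2 + 1))
    (hσ : ∀ n : ℕ, 2 ≤ n → σ n = σ (n - 1) ^ 2 - τ (n - 1) ^ 2)
    (hτ : ∀ n : ℕ, 2 ≤ n → τ n = 2 * σ (n - 1) * τ (n - 1))
    (hτk : τ k ≠ 1) :
    2 / ((((β : ℂ) + I) / ((β : ℂ) - I)) ^ (2 ^ (k - 1)) - I) - I =
      ((σ k / (1 - τ k) : ℝ) : ℂ) := by
  have hden : ((β : ℂ) - I) ≠ 0 := by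
    intro h
    have := congrArg Complex.im h
    simp at this
  have hb2 : ((β : ℂ) ^ 2 + 1) ≠ 0 := by
    have : (β ^ 2 + 1 : ℝ) ≠ 0 := by positivity
    exact_mod_cast fun h => this (by exact_mod_cast h)
  have key : ∀ n : ℕ, 1 ≤ n →
      ((((β : ℂ) + I) / ((β : ℂ) - I)) ^ (2 ^ (n - 1)) = (σ n : ℂ) + (τ n : ℂ) * I)
        ∧ σ n ^ 2 + τ n ^ 2 = 1 := by
    intro n hn
    induction n, hn using Nat.le_induction with
    | base =>
      constructor
      · simp only [Nat.sub_self, pow_zero, pow_one, hσ1, hτ1]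
        rw [div_eq_iff hden]
        push_cast
        field_simp
        linear_combination (2*(β:ℂ)) * Complex.I_sq
      · rw [hσ1, hτ1]
        field_simp
        ring
    | succ m hm ih =>
      obtain ⟨ih1, ih2⟩ := ih
      have hm1 : m + 1 - 1 = m := rfl
      have hpow : (2 : ℕ) ^ m = 2 ^ (m - 1) * 2 := by
        rw [← pow_succ, Nat.sub_add_cancel hm]
      constructor
      · rw [hm1, hpow, pow_mul, ih1, hσ (m+1) (by omega), hτ (m+1) (by omega)]
        simp only [Nat.add_sub_cancel]
        push_cast
        linear_combination ((τ m : ℂ)^2) * Complex.I_sq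
      · rw [hσ (m+1) (by omega), hτ (m+1) (by omega)]
        simp only [Nat.add_sub_cancel]
        nlinarith [ih2]
  obtain ⟨h1, h2⟩ := key k hk
  rw [h1]
  have hd2 : ((σ k : ℂ) + (τ k : ℂ) * I - I) ≠ 0 := by
    intro h
    have := congrArg Complex.im h
    simp at this
    exact hτk (by linarith)
  have hτ1 : (1 - τ k : ℝ) ≠ 0 := sub_ne_zero.mpr (fun h => hτk h.symm)
  have hτ1' : ((1 : ℂ) - (τ k : ℂ)) ≠ 0 := by
    exact_mod_cast fun h => hτ1 (by exact_mod_cast h)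
  push_cast
  field_simp
  have h2c : (σ k:ℂ)^2 + (τ k:ℂ)^2 = 1 := by exact_mod_cast congrArg (Complex.ofReal) h2
  linear_combination ((1:ℂ) - 2*(τ k:ℂ) + (τ k:ℂ)^2) * Complex.I_sq - h2c
end

section
/- The two-term Machin-like formula: π/4 = 32·arctan(1/40) - arctan( 38035138859000075702655846657186322249216830232319 / 2634699316100146880926635665506082395762836079845121 ). -/
open Real

lemma arctan_double {x : ℝ} (h : x * x < 1) :
    2 * Real.arctan x = Real.arctan (2 * x / (1 - x * x)) := by
  rw [two_mul, Real.arctan_add h, two_mul]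

theorem two_term_machin_like_k6 :
    Real.pi / 4 =
      32 * Real.arctan (1 / 40) -
        Real.arctan (38035138859000075702655846657186322249216830232319 /
          2634699316100146880926635665506082395762836079845121) := by
  have h1 : 2 * Real.arctan (1/40) = Real.arctan (80/1599) := by
    rw [arctan_double (by norm_num)]; norm_num
  have h2 : 2 * Real.arctan (80/1599) = Real.arctan (255840/2550401) := by
    rw [arctan_double (by norm_num)]; norm_num
  have h3 : 2 * Real.arctan (255840/2550401) = Real.arctan (1304989183680/6439091155201) := by
    rw [arctan_double (by norm_num)]; norm_num
  have h4 : 2 * Real.arctan (1304989183680/6439091155201) =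
      Real.arctan (16805888620533722352639360/39758898135465955891008001) := by
    rw [arctan_double (by norm_num)]; norm_num
  have h5 : 2 * Real.arctan (16805888620533722352639360/39758898135465955891008001) =
      Real.arctan (1336367227479573478314645756081634359006026455038720/1298332088620573402611989909424448036756809624806401) := by
    rw [arctan_double (by norm_num)]; norm_num
  have h32 : 32 * Real.arctan (1/40) =
      Real.arctan (1336367227479573478314645756081634359006026455038720/1298332088620573402611989909424448036756809624806401) := by
    rw [show (32:ℝ) = 2*(2*(2*(2*2))) by norm_num]
    rw [mul_assoc, mul_assoc, mul_assoc, mul_assoc, h1, h2, h3, h4, h5]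
  have key : Real.arctan (1336367227479573478314645756081634359006026455038720/1298332088620573402611989909424448036756809624806401)
      + Real.arctan (-(38035138859000075702655846657186322249216830232319 /
          2634699316100146880926635665506082395762836079845121)) = Real.arctan 1 := by
    rw [Real.arctan_add (by norm_num)]
    norm_num
  rw [Real.arctan_neg, Real.arctan_one] at key
  linarith [h32, key]
end

section
/- The three-term Machin-like formula: π/4 = 32·arctan(1/40) - arctan(1/70) - arctan( 27760404029858418259273600496960161682342036417209 / 184466987265869281740567152432082954025647742419390789 ). -/
theorem three_term_machin_like :
    Real.pi / 4 =
      32 * Real.arctan (1 / 40) - Real.arctan (1 / 70) -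
        Real.arctan (27760404029858418259273600496960161682342036417209 /
          184466987265869281740567152432082954025647742419390789) := by
  rw [show (32:ℝ) * Real.arctan (1/40)
      = 2*(2*(2*(2*(2*Real.arctan (1/40))))) by ring,
    Real.two_mul_arctan (by norm_num) (by norm_num),
    Real.two_mul_arctan (by norm_num) (by norm_num),
    Real.two_mul_arctan (by norm_num) (by norm_num),
    Real.two_mul_arctan (by norm_num) (by norm_num),
    Real.two_mul_arctan (by norm_num) (by norm_num),
    ← Real.arctan_one, sub_sub, Real.arctan_add (by norm_num),
    eq_sub_iff_add_eq, Real.arctan_add (by norm_num)]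
  congr 1
  norm_num
end

section
/- The four-term Machin-like formula: π/4 = 32·arctan(1/40) - arctan(1/70) - arctan(1/6645) - arctan( 448756269953796152961435108660176757544786481508 / 612891579071052703512243493592395863230295465359444105057 ). -/
open Real

theorem four_term_machin_like :
    Real.pi / 4 =
      32 * Real.arctan (1 / 40) - Real.arctan (1 / 70) - Real.arctan (1 / 6645) -
        Real.arctan (448756269953796152961435108660176757544786481508 /
          612891579071052703512243493592395863230295465359444105057) := by
  have h1 : 2 * Real.arctan (1 / 40) = Real.arctan (80 / 1599) := by
    rw [Real.two_mul_arctan (by norm_num) (by norm_num)]; norm_num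
  have h2 : 2 * Real.arctan (80 / 1599) = Real.arctan (255840 / 2550401) := by
    rw [Real.two_mul_arctan (by norm_num) (by norm_num)]; norm_num
  have h3 : 2 * Real.arctan (255840 / 2550401) =
      Real.arctan (1304989183680 / 6439091155201) := by
    rw [Real.two_mul_arctan (by norm_num) (by norm_num)]; norm_num
  have h4 : 2 * Real.arctan (1304989183680 / 6439091155201) =
      Real.arctan (16805888620533722352639360 / 39758898135465955891008001) := by
    rw [Real.two_mul_arctan (by norm_num) (by norm_num)]; norm_num
  have h5 : 2 * Real.arctan (16805888620533722352639360 / 39758898135465955891008001) =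
      Real.arctan (1336367227479573478314645756081634359006026455038720 /
        1298332088620573402611989909424448036756809624806401) := by
    rw [Real.two_mul_arctan (by norm_num) (by norm_num)]; norm_num
  have k1 : Real.arctan 1 + Real.arctan (1 / 70) = Real.arctan (71 / 69) := by
    rw [Real.arctan_add (by norm_num)]; norm_num
  have k2 : Real.arctan (71 / 69) + Real.arctan (1 / 6645) =
      Real.arctan (235932 / 229217) := by
    rw [Real.arctan_add (by norm_num)]; norm_num
  have k3 : Real.arctan (235932 / 229217) +
      Real.arctan (448756269953796152961435108660176757544786481508 /
        612891579071052703512243493592395863230295465359444105057) =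
      Real.arctan (1336367227479573478314645756081634359006026455038720 /
        1298332088620573402611989909424448036756809624806401) := by
    rw [Real.arctan_add (by norm_num)]; norm_num
  have harctan1 : Real.arctan 1 = Real.pi / 4 := Real.arctan_one
  linarith [h1, h2, h3, h4, h5, k1, k2, k3]
end

section
/- The five-term Machin-like formula: π/4 = 32·arctan(1/40) - arctan(1/70) - arctan(1/6645) - arctan(1/1365756025) - arctan( 374870864016658098706770220951460879098657980643 / 837060366788054133363141482594659697353287103005016334677117199933 ). -/
open Real

theorem five_term_machin_like :
    Real.pi / 4 =
      32 * Real.arctan (1 / 40) - Real.arctan (1 / 70) - Real.arctan (1 / 6645) -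
        Real.arctan (1 / 1365756025) -
        Real.arctan (374870864016658098706770220951460879098657980643 /
          837060366788054133363141482594659697353287103005016334677117199933) := by
  have h0 : Real.arctan (1 / 40 : ℝ) + Real.arctan (1 / 40 : ℝ) = Real.arctan (80 / 1599 : ℝ) := by
    rw [Real.arctan_add (by norm_num)]
    norm_num
  have h1 : Real.arctan (80 / 1599 : ℝ) + Real.arctan (80 / 1599 : ℝ) = Real.arctan (255840 / 2550401 : ℝ) := by
    rw [Real.arctan_add (by norm_num)]
    norm_num
  have h2 : Real.arctan (255840 / 2550401 : ℝ) + Real.arctan (255840 / 2550401 : ℝ) = Real.arctan (1304989183680 / 6439091155201 : ℝ) := by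
    rw [Real.arctan_add (by norm_num)]
    norm_num
  have h3 : Real.arctan (1304989183680 / 6439091155201 : ℝ) + Real.arctan (1304989183680 / 6439091155201 : ℝ) = Real.arctan (16805888620533722352639360 / 39758898135465955891008001 : ℝ) := by
    rw [Real.arctan_add (by norm_num)]
    norm_num
  have h4 : Real.arctan (16805888620533722352639360 / 39758898135465955891008001 : ℝ) + Real.arctan (16805888620533722352639360 / 39758898135465955891008001 : ℝ) = Real.arctan (1336367227479573478314645756081634359006026455038720 / 1298332088620573402611989909424448036756809624806401 : ℝ) := by
    rw [Real.arctan_add (by norm_num)]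
    norm_num
  have g0 : Real.arctan (1336367227479573478314645756081634359006026455038720 / 1298332088620573402611989909424448036756809624806401 : ℝ) + Real.arctan (-(1 / 70) : ℝ) = Real.arctan (92247373834949570079413213016289957093665042227903999 / 92219613430919711661153939415792996931982700191486790 : ℝ) := by
    rw [Real.arctan_add (by norm_num)]
    norm_num
  have g1 : Real.arctan (92247373834949570079413213016289957093665042227903999 / 92219613430919711661153939415792996931982700191486790 : ℝ) + Real.arctan (-(1 / 6645) : ℝ) = Real.arctan (612891579519808973466039646553830971890472222904230586565 / 612891578622296433558447340630960754570118707814657623549 : ℝ) := by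
    rw [Real.arctan_add (by norm_num)]
    norm_num
  have g2 : Real.arctan (612891579519808973466039646553830971890472222904230586565 / 612891578622296433558447340630960754570118707814657623549 : ℝ) + Real.arctan (-(1 / 1365756025) : ℝ) = Real.arctan (418530183394027066869006173305658898030028661978238606887887590288 / 418530183394027066494135309289000799323258441026777727789229609645 : ℝ) := by
    rw [Real.arctan_add (by norm_num)]
    norm_num
  have g3 : Real.arctan (418530183394027066869006173305658898030028661978238606887887590288 / 418530183394027066494135309289000799323258441026777727789229609645 : ℝ) + Real.arctan (-(374870864016658098706770220951460879098657980643 / 837060366788054133363141482594659697353287103005016334677117199933) : ℝ) = Real.arctan (1 / 1 : ℝ) := by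
    rw [Real.arctan_add (by norm_num)]
    norm_num
  have n1 := Real.arctan_neg ((1:ℝ)/70)
  have n2 := Real.arctan_neg ((1:ℝ)/6645)
  have n3 := Real.arctan_neg ((1:ℝ)/1365756025)
  have n4 := Real.arctan_neg ((374870864016658098706770220951460879098657980643:ℝ)/837060366788054133363141482594659697353287103005016334677117199933)
  have one : Real.arctan (1/1 : ℝ) = Real.pi/4 := by norm_num [Real.arctan_one]
  linarith
end

section
/- The two-term Machin-like formula for k = 4: π/4 = 8·arctan(1/10) - arctan( 1758719 / 147153121 ). -/
theorem two_term_machin_like_k4 :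
    Real.pi / 4 = 8 * Real.arctan (1 / 10) - Real.arctan (1758719 / 147153121) := by
  rw [show (8:ℝ) * Real.arctan (1/10) = 2 * (2 * (2 * _)) by ring, Real.two_mul_arctan,
    Real.two_mul_arctan, Real.two_mul_arctan, eq_sub_iff_add_eq, ← Real.arctan_one,
    Real.arctan_add] <;> norm_num
end

section
/- The four-term Machin-like formula: π/4 = 8·arctan(1/10) - arctan(1/84) - arctan(1/21342) - arctan( 266167 / 263843055464261 ). -/
open Real

theorem four_term_machin_like_k4 :
    Real.pi / 4 =
      8 * Real.arctan (1 / 10) - Real.arctan (1 / 84) - Real.arctan (1 / 21342) -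
        Real.arctan (266167 / 263843055464261) := by
  rw [show (8:ℝ) * arctan (1/10) = 2*(2*(2*arctan (1/10))) by ring, two_mul_arctan,
    two_mul_arctan, two_mul_arctan, eq_sub_iff_add_eq, eq_sub_iff_add_eq, eq_sub_iff_add_eq,
    ← arctan_one, add_assoc, add_assoc, arctan_add, arctan_add, arctan_add] <;> norm_num
end

section
/- The seven-term Machin-like formula with only integer reciprocals: π/4 = 8·arctan(1/10) - arctan(1/84) - arctan(1/21342) - arctan(1/991268848) - arctan(1/193018008592515208050) - arctan(1/197967899896401851763240424238758988350338) - arctan(1/117573868168175352930277752844194126767991915008537018836932014293678271636885792397). -/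
open Real

lemma my_arctan_sub {x y : ℝ} (h : -1 < x * y) :
    Real.arctan x - Real.arctan y = Real.arctan ((x - y) / (1 + x * y)) := by
  rw [sub_eq_add_neg, ← Real.arctan_neg y, Real.arctan_add (by nlinarith)]
  congr 1
  ring_nf

theorem seven_term_machin_like_k4 :
    Real.pi / 4 =
      8 * Real.arctan (1 / 10) - Real.arctan (1 / 84) - Real.arctan (1 / 21342) -
        Real.arctan (1 / 991268848) - Real.arctan (1 / 193018008592515208050) -
        Real.arctan (1 / 197967899896401851763240424238758988350338) -
        Real.arctan
          (1 / 117573868168175352930277752844194126767991915008537018836932014293678271636885792397) := by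
  have h1 : (2:ℝ) * Real.arctan (1/10) = Real.arctan (20/99) := by
    rw [Real.two_mul_arctan (by norm_num) (by norm_num)]; norm_num
  have h2 : (2:ℝ) * Real.arctan (20/99) = Real.arctan (3960/9401) := by
    rw [Real.two_mul_arctan (by norm_num) (by norm_num)]; norm_num
  have h3 : (2:ℝ) * Real.arctan (3960/9401) = Real.arctan (74455920/72697201) := by
    rw [Real.two_mul_arctan (by norm_num) (by norm_num)]; norm_num
  have h8 : (8:ℝ) * Real.arctan (1/10) = Real.arctan (74455920/72697201) := by
    rw [show (8:ℝ) * Real.arctan (1/10) = 2 * (2 * (2 * Real.arctan (1/10))) by ring,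
      h1, h2, h3]
  rw [h8,
    my_arctan_sub (x := 74455920/72697201) (y := 1/84) (by norm_num)]
  norm_num
  rw [my_arctan_sub (x := 6181600079/6181020804) (y := 1/21342) (by norm_num)]
  norm_num
  rw [my_arctan_sub (x := 131921527865214/131921527599047) (y := 1/991268848) (by norm_num)]
  norm_num
  rw [my_arctan_sub (x := 26153940164285810690885/26153940164285810690614)
      (y := 1/193018008592515208050) (by norm_num)]
  norm_num
  rw [my_arctan_sub (x := 296951849844602777644860636358138482525508/296951849844602777644860636358138482525505)
      (y := 1/197967899896401851763240424238758988350338) (by norm_num)]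
  norm_num
  rw [my_arctan_sub (x := 58786934084087676465138876422097063383995957504268509418466007146839135818442896199/58786934084087676465138876422097063383995957504268509418466007146839135818442896198)
      (y := 1/117573868168175352930277752844194126767991915008537018836932014293678271636885792397) (by norm_num)]
  norm_num [Real.arctan_one]
end

section
/- The five-term Machin-like formula arising from the alternative iterative method: π/4 = 8·( arctan(1/10) - arctan(1/684) - arctan(1/701102) - arctan(1/983087327708) ) - arctan( 1033248635280959 / 4239006656613482881 ). -/
open Real

theorem alternative_method_formula :
    Real.pi / 4 =
      8 * (Real.arctan (1 / 10) - Real.arctan (1 / 684) - Real.arctan (1 / 701102) -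
          Real.arctan (1 / 983087327708)) -
        Real.arctan (1033248635280959 / 4239006656613482881) := by
  have h1 : Real.arctan (1/10) - Real.arctan (1/684) = Real.arctan (674/6841) := by
    rw [sub_eq_add_neg, ← Real.arctan_neg, Real.arctan_add (by norm_num)]
    norm_num
  have h2 : Real.arctan (674/6841) - Real.arctan (1/701102)
      = Real.arctan (472535907/4796239456) := by
    rw [sub_eq_add_neg, ← Real.arctan_neg, Real.arctan_add (by norm_num)]
    norm_num
  have h3 : Real.arctan (472535907/4796239456) - Real.arctan (1/983087327708)
      = Real.arctan (20/203) := by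
    rw [sub_eq_add_neg, ← Real.arctan_neg, Real.arctan_add (by norm_num)]
    norm_num
  have h4 : (2:ℝ) * Real.arctan (20/203) = Real.arctan (8120/40809) := by
    rw [Real.two_mul_arctan (by norm_num) (by norm_num)]
    norm_num
  have h5 : (2:ℝ) * Real.arctan (8120/40809) = Real.arctan (662738160/1599440081) := by
    rw [Real.two_mul_arctan (by norm_num) (by norm_num)]
    norm_num
  have h6 : (2:ℝ) * Real.arctan (662738160/1599440081)
      = Real.arctan (2120019952624381920/2118986703989100961) := by
    rw [Real.two_mul_arctan (by norm_num) (by norm_num)]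
    norm_num
  rw [h1, h2, h3, show (8:ℝ) * Real.arctan (20/203)
      = 2 * (2 * (2 * Real.arctan (20/203))) by ring, h4, h5, h6,
    sub_eq_add_neg, ← Real.arctan_neg, Real.arctan_add (by norm_num)]
  norm_num [← Real.arctan_one]
end
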